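/- Grid counting bound for the entropy estimate: let τ̃ > t̃ + δ > t̃ > 5/2 and C ≥ 1. For each m ≤ M := ⌈(C/ε)^{1/(τ̃−t̃)}⌉ and each of the m+1 admissible values of l, let G_{(l,m)} be a grid of at most ⌈4C(m+1)^{τ̃−t̃}/ε⌉² points in the square [−(m+1)^{−τ̃}, (m+1)^{−τ̃}]² ⊂ ℂ such that every point of the square is within ε/(C(m+1)^{t̃}) of a grid point in each coordinate. Then the total number of coefficient vectors, Π_{m=0}^{M} Π_{l} |G_{(l,m)}|, is at most exp( log(C/ε) · (C/ε)^{2/(τ̃−t̃)} · C'' ) for a constant C'' independent of ε; in particular, for sufficiently small ε it is at most exp( (C/ε)^{2/(τ̃ − t̃ − δ)} ). -/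

import Mathlib

open Real Finset

/-- The admissible angular indices for degree `m`: `l ∈ {m, m-2, …, -m}`. -/
noncomputable def admissible (m : ℕ) : Finset ℤ :=
  (Finset.Icc (-(m : ℤ)) m).filter fun l => Even (m - l.natAbs)

lemma admissible_card_le (m : ℕ) : (admissible m).card ≤ 2 * m + 2 := by
  have h := Finset.card_filter_le (Finset.Icc (-(m : ℤ)) m)
    (fun l => Even (m - l.natAbs))
  have h2 : (Finset.Icc (-(m : ℤ)) m).card = 2 * m + 1 := by
    rw [Int.card_Icc]; omega
  unfold admissible
  omega

/-- Grid counting bound for the entropy estimate: the total number of coefficient vectors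
built from grids `G_{(l,m)}` with at most `⌈4C(m+1)^{τ−t}/ε⌉²` points each, over
`m ≤ M = ⌈(C/ε)^{1/(τ−t)}⌉` and the `m+1` admissible `l`, is at most
`exp(log(C/ε)(C/ε)^{2/(τ−t)} C'')` for a constant `C''` independent of `ε`; in
particular, for sufficiently small `ε` it is at most `exp((C/ε)^{2/(τ−t−δ)})`. -/
theorem grid_counting_bound (τ t δ C : ℝ) (ht : 5 / 2 < t) (hδ : 0 < δ)
    (hτ : t + δ < τ) (hC : 1 ≤ C) :
    ∃ C'' : ℝ, 0 < C'' ∧ ∃ ε₁ : ℝ, 0 < ε₁ ∧ ε₁ ≤ 1 ∧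
      ∀ ε : ℝ, 0 < ε → ε ≤ ε₁ →
        ∀ G : ℕ → ℤ → Finset ℂ,
          (∀ (m : ℕ) (l : ℤ),
            (G m l).card ≤ ⌈4 * C * ((m : ℝ) + 1) ^ (τ - t) / ε⌉₊ ^ 2) →
          (∀ (m : ℕ), ∀ l ∈ admissible m, ∀ z : ℂ,
            |z.re| ≤ ((m : ℝ) + 1) ^ (-τ) → |z.im| ≤ ((m : ℝ) + 1) ^ (-τ) →
            ∃ w ∈ G m l, |z.re - w.re| ≤ ε / (C * ((m : ℝ) + 1) ^ t) ∧
              |z.im - w.im| ≤ ε / (C * ((m : ℝ) + 1) ^ t)) →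
          ((∏ m ∈ Finset.range (⌈(C / ε) ^ (1 / (τ - t))⌉₊ + 1),
              ∏ l ∈ admissible m, ((G m l).card : ℝ)) ≤
            Real.exp (Real.log (C / ε) * (C / ε) ^ (2 / (τ - t)) * C'')) ∧
          ((∏ m ∈ Finset.range (⌈(C / ε) ^ (1 / (τ - t))⌉₊ + 1),
              ∏ l ∈ admissible m, ((G m l).card : ℝ)) ≤
            Real.exp ((C / ε) ^ (2 / (τ - t - δ)))) := by
  have hs0 : 0 < τ - t := by linarith
  have hsδ0 : 0 < τ - t - δ := by linarith
  set s := τ - t with hs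
  set K : ℝ := 4 * (3 : ℝ) ^ s + 1 with hKdef
  have h3s : (1 : ℝ) ≤ (3 : ℝ) ^ s := Real.one_le_rpow (by norm_num) hs0.le
  have hK1 : (1 : ℝ) ≤ K := by nlinarith
  have hK0 : (0 : ℝ) < K := by linarith
  have hlogK : 0 ≤ Real.log K := Real.log_nonneg hK1
  set a : ℝ := 2 / (s - δ) - 2 / s with hadef
  have ha : 0 < a := by
    have h1 : 2 / s < 2 / (s - δ) := by
      apply div_lt_div_of_pos_left (by norm_num) hsδ0 (by linarith)
    rw [hadef]; linarith
  set C'' : ℝ := 36 * (Real.log K + 2) with hC''def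
  have hC''pos : 0 < C'' := by nlinarith
  set B : ℝ := max 1 (2 * C'' / a) with hBdef
  have hB1 : (1 : ℝ) ≤ B := le_max_left _ _
  clear_value s K a C'' B
  have hBpos : 0 < B := lt_of_lt_of_le one_pos hB1
  refine ⟨C'', hC''pos, min (Real.exp (-1)) (B ^ (-(2 / a))), ?_, ?_, ?_⟩
  · exact lt_min (Real.exp_pos _) (Real.rpow_pos_of_pos hBpos _)
  · calc min (Real.exp (-1)) (B ^ (-(2 / a))) ≤ Real.exp (-1) := min_le_left _ _
      _ ≤ 1 := by rw [Real.exp_le_one_iff]; norm_num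
  intro ε hε hεle G hcard _hcov
  clear _hcov
  set x : ℝ := C / ε with hxdef
  have hx0 : 0 < x := by rw [hxdef]; positivity
  clear_value x
  have hxε : ε⁻¹ ≤ x := by
    rw [hxdef, div_eq_mul_inv]
    nlinarith [inv_pos.mpr hε]
  have hεe : ε ≤ Real.exp (-1) := le_trans hεle (min_le_left _ _)
  have hx_exp : Real.exp 1 ≤ x := by
    have h1 : (Real.exp (-1))⁻¹ ≤ ε⁻¹ := inv_anti₀ hε hεe
    rw [Real.exp_neg, inv_inv] at h1
    exact le_trans h1 hxε
  have hx1 : 1 ≤ x := le_trans (Real.one_le_exp (by norm_num)) hx_exp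
  have hlogx : 1 ≤ Real.log x := by
    have := Real.log_le_log (Real.exp_pos 1) hx_exp
    rwa [Real.log_exp] at this
  have hxB : B ^ (2 / a) ≤ x := by
    have hεB : ε ≤ B ^ (-(2 / a)) := le_trans hεle (min_le_right _ _)
    have h1 : (B ^ (-(2 / a)))⁻¹ ≤ ε⁻¹ := inv_anti₀ hε hεB
    rw [Real.rpow_neg hBpos.le, inv_inv] at h1
    exact le_trans h1 hxε
  set u : ℝ := x ^ (1 / s) with hu
  clear_value u
  have hu1 : 1 ≤ u := by
    rw [hu]; exact Real.one_le_rpow hx1 (le_of_lt (by positivity))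
  have hu0 : (0 : ℝ) ≤ u := by linarith
  set M : ℕ := ⌈u⌉₊ with hM
  clear_value M
  have hMle : (M : ℝ) + 1 ≤ 3 * u := by
    have := (Nat.ceil_lt_add_one hu0).le
    rw [hM]; linarith
  -- uniform bound on each grid cardinality
  set D : ℝ := (K * x ^ 2) ^ 2 with hDdef
  clear_value D
  have hx2 : (1 : ℝ) ≤ x ^ 2 := one_le_pow₀ hx1
  have hKx2 : (1 : ℝ) ≤ K * x ^ 2 :=
    le_trans hK1 (le_mul_of_one_le_right (by positivity) hx2)
  have hD1 : (1 : ℝ) ≤ D := by rw [hDdef]; exact one_le_pow₀ hKx2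
  have hD0 : (0 : ℝ) < D := by linarith
  have hus : u ^ s = x := by
    rw [hu, ← Real.rpow_mul hx0.le, one_div, inv_mul_cancel₀ hs0.ne',
      Real.rpow_one]
  have hfac : ∀ m ∈ Finset.range (M + 1), ∀ l ∈ admissible m,
      ((G m l).card : ℝ) ≤ D := by
    intro m hm l _
    have hmM : (m : ℝ) ≤ (M : ℝ) := by
      exact_mod_cast Nat.lt_succ_iff.mp (Finset.mem_range.mp hm)
    have hm1 : (m : ℝ) + 1 ≤ 3 * u := by linarith
    have hpow : ((m : ℝ) + 1) ^ s ≤ 3 ^ s * x := by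
      calc ((m : ℝ) + 1) ^ s ≤ (3 * u) ^ s :=
            Real.rpow_le_rpow (by positivity) hm1 hs0.le
        _ = 3 ^ s * u ^ s := Real.mul_rpow (by norm_num) hu0
        _ = 3 ^ s * x := by rw [hus]
    have harg : 4 * C * ((m : ℝ) + 1) ^ s / ε ≤ 4 * (3 : ℝ) ^ s * x ^ 2 := by
      have h1 : 4 * C * ((m : ℝ) + 1) ^ s / ε ≤ 4 * C * (3 ^ s * x) / ε := by
        gcongr
      have h2 : 4 * C * ((3 : ℝ) ^ s * x) / ε = 4 * 3 ^ s * x ^ 2 := by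
        rw [hxdef]; field_simp
      linarith
    have hceil : (⌈4 * C * ((m : ℝ) + 1) ^ s / ε⌉₊ : ℝ) ≤ K * x ^ 2 := by
      have h1 : (⌈4 * C * ((m : ℝ) + 1) ^ s / ε⌉₊ : ℝ) ≤
          4 * C * ((m : ℝ) + 1) ^ s / ε + 1 :=
        (Nat.ceil_lt_add_one (by positivity)).le
      have hKx : K * x ^ 2 = 4 * (3 : ℝ) ^ s * x ^ 2 + x ^ 2 := by
        rw [hKdef]; ring
      linarith
    have h0 : ((G m l).card : ℝ) ≤ ((⌈4 * C * ((m : ℝ) + 1) ^ s / ε⌉₊ ^ 2 : ℕ) : ℝ) :=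
      Nat.cast_le.mpr (hcard m l)
    rw [Nat.cast_pow] at h0
    calc ((G m l).card : ℝ) ≤ ((⌈4 * C * ((m : ℝ) + 1) ^ s / ε⌉₊ : ℝ)) ^ 2 := h0
      _ ≤ (K * x ^ 2) ^ 2 := by
          apply pow_le_pow_left₀ (by positivity) hceil
      _ = D := hDdef.symm
  set n : ℕ := ∑ m ∈ Finset.range (M + 1), (admissible m).card with hn
  clear_value n
  have hprodD : (∏ m ∈ Finset.range (M + 1), ∏ l ∈ admissible m,
      ((G m l).card : ℝ)) ≤ D ^ n := by
    calc (∏ m ∈ Finset.range (M + 1), ∏ l ∈ admissible m, ((G m l).card : ℝ))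
        ≤ ∏ m ∈ Finset.range (M + 1), ∏ l ∈ admissible m, D := by
          apply Finset.prod_le_prod
          · intro m _; exact Finset.prod_nonneg fun l _ => by positivity
          · intro m hm
            exact Finset.prod_le_prod (fun l _ => by positivity) (hfac m hm)
      _ = D ^ n := by
          simp [Finset.prod_const, Finset.prod_pow_eq_pow_sum, hn]
  have hncard : n ≤ 2 * (M + 1) ^ 2 := by
    have h1 : n ≤ ∑ m ∈ Finset.range (M + 1), (2 * M + 2) := by
      rw [hn]
      apply Finset.sum_le_sum
      intro m hm
      have := admissible_card_le m
      have := Nat.lt_succ_iff.mp (Finset.mem_range.mp hm)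
      omega
    rw [Finset.sum_const, Finset.card_range, smul_eq_mul] at h1
    have h2 : (M + 1) * (2 * M + 2) = 2 * (M + 1) ^ 2 := by ring
    exact h1.trans (le_of_eq h2)
  have hu2 : u ^ 2 = x ^ (2 / s) := by
    rw [hu, ← Real.rpow_natCast (x ^ (1 / s)) 2, ← Real.rpow_mul hx0.le]
    congr 1
    push_cast
    ring
  have hnR : (n : ℝ) ≤ 18 * x ^ (2 / s) := by
    have h1 : (n : ℝ) ≤ 2 * ((M : ℝ) + 1) ^ 2 := by exact_mod_cast hncard
    have h2 : ((M : ℝ) + 1) ^ 2 ≤ (3 * u) ^ 2 := by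
      apply pow_le_pow_left₀ (by positivity) hMle
    have h3 : (3 * u) ^ 2 = 9 * x ^ (2 / s) := by rw [mul_pow, ← hu2]; ring
    linarith
  have hlogD : Real.log D ≤ 2 * (Real.log K + 2) * Real.log x := by
    have heq : Real.log D = 2 * (Real.log K + 2 * Real.log x) := by
      rw [hDdef, Real.log_pow, Real.log_mul hK0.ne' (by positivity),
        Real.log_pow]
      push_cast; ring
    have h4 : Real.log K ≤ Real.log K * Real.log x :=
      le_mul_of_one_le_right hlogK hlogx
    rw [heq]; linarith
  have hlogD0 : 0 ≤ Real.log D := Real.log_nonneg hD1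
  have key : (n : ℝ) * Real.log D ≤ Real.log x * x ^ (2 / s) * C'' := by
    calc (n : ℝ) * Real.log D
        ≤ (18 * x ^ (2 / s)) * (2 * (Real.log K + 2) * Real.log x) :=
          mul_le_mul hnR hlogD hlogD0 (by positivity)
      _ = Real.log x * x ^ (2 / s) * C'' := by rw [hC''def]; ring
  have goal1 : (∏ m ∈ Finset.range (M + 1), ∏ l ∈ admissible m,
      ((G m l).card : ℝ)) ≤ Real.exp (Real.log x * x ^ (2 / s) * C'') := by
    calc (∏ m ∈ Finset.range (M + 1), ∏ l ∈ admissible m, ((G m l).card : ℝ))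
        ≤ D ^ n := hprodD
      _ = Real.exp ((n : ℝ) * Real.log D) := by
          rw [← Real.log_pow, Real.exp_log (pow_pos hD0 n)]
      _ ≤ Real.exp (Real.log x * x ^ (2 / s) * C'') := Real.exp_le_exp.mpr key
  refine ⟨goal1, le_trans goal1 (Real.exp_le_exp.mpr ?_)⟩
  -- log x * x^(2/s) * C'' ≤ x^(2/(s-δ))
  have hsplit : x ^ (2 / (s - δ)) = x ^ (2 / s) * x ^ a := by
    rw [← Real.rpow_add hx0, hadef]
    congr 1
    ring
  have hlog2 : (a / 2) * Real.log x ≤ x ^ (a / 2) := by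
    have h := Real.log_le_sub_one_of_pos (Real.rpow_pos_of_pos hx0 (a / 2))
    rw [Real.log_rpow hx0] at h
    linarith
  have hxa2 : 2 * C'' / a ≤ x ^ (a / 2) := by
    calc 2 * C'' / a ≤ B := by rw [hBdef]; exact le_max_right _ _
      _ = (B ^ (2 / a)) ^ (a / 2) := by
          rw [← Real.rpow_mul hBpos.le]
          rw [show (2 / a) * (a / 2) = 1 by field_simp, Real.rpow_one]
      _ ≤ x ^ (a / 2) :=
          Real.rpow_le_rpow (Real.rpow_nonneg hBpos.le _) hxB (by positivity)
  have hCa : C'' * Real.log x ≤ x ^ a := by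
    have h1 : C'' * Real.log x = (2 * C'' / a) * ((a / 2) * Real.log x) := by
      field_simp
    have h2 : (2 * C'' / a) * ((a / 2) * Real.log x) ≤ (2 * C'' / a) * x ^ (a / 2) := by
      apply mul_le_mul_of_nonneg_left hlog2 (by positivity)
    have h3 : (2 * C'' / a) * x ^ (a / 2) ≤ x ^ (a / 2) * x ^ (a / 2) := by
      apply mul_le_mul_of_nonneg_right hxa2 (by positivity)
    have h4 : x ^ (a / 2) * x ^ (a / 2) = x ^ a := by
      rw [← Real.rpow_add hx0]; ring_nf
    linarith
  calc Real.log x * x ^ (2 / s) * C'' = (C'' * Real.log x) * x ^ (2 / s) := by ring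
    _ ≤ x ^ a * x ^ (2 / s) :=
        mul_le_mul_of_nonneg_right hCa (by positivity)
    _ = x ^ (2 / (s - δ)) := by rw [hsplit]; ring
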